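/- Let K be a field of characteristic zero and let φ be the K-algebra endomorphism of K[x,y] given by φ(x) = x and φ(y) = y·h(x,y) for some h ∈ K[x,y], h ≠ 0. Suppose that for every coordinate p of K[x,y], the subalgebra K[φ(p)] is a proper retract of K[x,y]. Then h is a nonzero constant, and consequently φ is a K-algebra automorphism of K[x,y]. -/

import Mathlib

open MvPolynomial

noncomputable section

/-- The polynomial ring `K[x,y]`, with `x = X 0` and `y = X 1`. -/
abbrev P2 (K : Type*) [Field K] := MvPolynomial (Fin 2) K

/-- A subalgebra `R` of `K[x,y]` is a retract if it is the image of an idempotent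
`K`-algebra endomorphism of `K[x,y]`. -/
def IsRetract (K : Type*) [Field K] (R : Subalgebra K (P2 K)) : Prop :=
  ∃ π : P2 K →ₐ[K] P2 K, π.comp π = π ∧ π.range = R

/-- A proper retract is a retract different from `K` (the bottom subalgebra) and
from `K[x,y]` itself. -/
def IsProperRetract (K : Type*) [Field K] (R : Subalgebra K (P2 K)) : Prop :=
  IsRetract K R ∧ R ≠ ⊥ ∧ R ≠ ⊤

/-- `p` is a coordinate of `K[x,y]` if some `K`-algebra automorphism sends `x` to `p`. -/
def IsCoordinate (K : Type*) [Field K] (p : P2 K) : Prop :=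
  ∃ σ : P2 K ≃ₐ[K] P2 K, σ (X 0) = p

namespace FinalStepAux

variable {K : Type*} [Field K]

lemma natDegree_paeval (A q : Polynomial K) :
    (Polynomial.aeval A q).natDegree = q.natDegree * A.natDegree := by
  have h : Polynomial.aeval A q = q.comp A := by
    rw [Polynomial.aeval_def, Polynomial.comp, Polynomial.algebraMap_eq]
  rw [h, Polynomial.natDegree_comp]

lemma paeval_ne_zero {A q : Polynomial K} (hq : q ≠ 0) (hA : 1 ≤ A.natDegree) :
    Polynomial.aeval A q ≠ 0 := by
  have h : Polynomial.aeval A q = q.comp A := by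
    rw [Polynomial.aeval_def, Polynomial.comp, Polynomial.algebraMap_eq]
  rw [h, Ne, Polynomial.comp_eq_zero_iff]
  rintro (rfl | ⟨-, hA'⟩)
  · exact hq rfl
  · rw [hA'] at hA; simp at hA

variable (K)

/-- Iso sending `X 1` to the outer variable and `X 0` to the inner one. -/
def Psi : MvPolynomial (Fin 2) K ≃ₐ[K] Polynomial (Polynomial K) :=
  (renameEquiv K (Equiv.swap 0 1)).trans
    ((finSuccEquiv K 1).trans
      (Polynomial.mapAlgEquiv
        ((finSuccEquiv K 0).trans
          (Polynomial.mapAlgEquiv (isEmptyAlgEquiv K (Fin 0))))))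

variable {K}

@[simp] lemma Psi_X0 : Psi K (X 0) = Polynomial.C Polynomial.X := by
  simp only [Psi, AlgEquiv.trans_apply, renameEquiv_apply, rename_X]
  rw [Equiv.swap_apply_left]
  rw [show (X (1 : Fin 2) : MvPolynomial (Fin 2) K) = X (Fin.succ 0) by norm_num]
  rw [finSuccEquiv_X_succ]
  simp [Polynomial.mapAlgEquiv, finSuccEquiv_X_zero]

@[simp] lemma Psi_X1 : Psi K (X 1) = Polynomial.X := by
  simp only [Psi, AlgEquiv.trans_apply, renameEquiv_apply, rename_X]
  rw [Equiv.swap_apply_right, finSuccEquiv_X_zero]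
  simp [Polynomial.mapAlgEquiv]

/-- The evaluation `K[x][y] → K[t]`, `x ↦ A`, `y ↦ B`. -/
def Ev (A B : Polynomial K) : Polynomial (Polynomial K) →ₐ[K] Polynomial K :=
  ((Polynomial.aeval B).restrictScalars K).comp (Polynomial.mapAlgHom (Polynomial.aeval A))

lemma aeval_pair (A B : Polynomial K) (h : MvPolynomial (Fin 2) K) :
    MvPolynomial.aeval ![A, B] h = Ev A B (Psi K h) := by
  have h1 : MvPolynomial.aeval ![A, B] = (Ev A B).comp (Psi K).toAlgHom := by
    apply MvPolynomial.algHom_ext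
    intro i
    fin_cases i <;>
      simp [Ev, Polynomial.coe_mapAlgHom]
  rw [h1]; rfl

lemma aeval_pair_sum (A B : Polynomial K) (h : MvPolynomial (Fin 2) K) :
    MvPolynomial.aeval ![A, B] h =
      ∑ j ∈ Finset.range ((Psi K h).natDegree + 1),
        Polynomial.aeval A ((Psi K h).coeff j) * B ^ j := by
  rw [aeval_pair]
  set G := Psi K h with hG
  have h1 : Ev A B G = Polynomial.aeval B (G.map (Polynomial.aeval A).toRingHom) := by
    rfl
  rw [h1]
  have h2 : (G.map (Polynomial.aeval A).toRingHom).natDegree < G.natDegree + 1 :=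
    lt_of_le_of_lt (Polynomial.natDegree_map_le) (Nat.lt_succ_self _)
  rw [Polynomial.aeval_eq_sum_range' h2]
  refine Finset.sum_congr rfl fun j _ => ?_
  rw [Polynomial.coeff_map, smul_eq_mul]
  rfl

lemma key_sum (A B : Polynomial K) (h : MvPolynomial (Fin 2) K) :
    B * MvPolynomial.aeval ![A, B] h
      = ∑ j ∈ Finset.range ((Psi K h).natDegree + 1),
          Polynomial.aeval A ((Psi K h).coeff j) * B ^ (j + 1) := by
  rw [aeval_pair_sum, Finset.mul_sum]
  exact Finset.sum_congr rfl fun j _ => by ring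

lemma aeval_pair_Cb (A : Polynomial K) (b : K) (h : MvPolynomial (Fin 2) K) :
    MvPolynomial.aeval ![A, Polynomial.C b] h
      = Polynomial.aeval A
          ((Polynomial.aeval (Polynomial.C b) :
              Polynomial (Polynomial K) →ₐ[Polynomial K] Polynomial K) (Psi K h)) := by
  have h1 : (MvPolynomial.aeval ![A, Polynomial.C b] : P2 K →ₐ[K] Polynomial K)
      = ((Polynomial.aeval A).comp
          ((Polynomial.aeval (Polynomial.C b) :
              Polynomial (Polynomial K) →ₐ[Polynomial K] Polynomial K).restrictScalars K)).comp
        (Psi K).toAlgHom := by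
    apply MvPolynomial.algHom_ext
    intro i
    fin_cases i <;>
      simp [AlgHom.coe_restrictScalars']
  rw [h1]; rfl

lemma le_natDegree_sum (s : Finset ℕ) (F : ℕ → Polynomial K) (d : ℕ → ℕ)
    (hd : ∀ j ∈ s, F j ≠ 0 → (F j).natDegree = d j)
    (hinj : ∀ j ∈ s, ∀ l ∈ s, F j ≠ 0 → F l ≠ 0 → d j = d l → j = l)
    (j₀ : ℕ) (hj₀ : j₀ ∈ s) (hF0 : F j₀ ≠ 0) :
    d j₀ ≤ (∑ j ∈ s, F j).natDegree := by
  classical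
  set t := s.filter (fun j => F j ≠ 0) with ht
  have hsum : ∑ j ∈ s, F j = ∑ j ∈ t, F j := by
    rw [ht]; exact (Finset.sum_filter_ne_zero s).symm
  have hj₀t : j₀ ∈ t := by simp [ht, hj₀, hF0]
  obtain ⟨jm, hjm, hmax⟩ := Finset.exists_max_image t d ⟨j₀, hj₀t⟩
  have hjms : jm ∈ s := (Finset.mem_filter.mp hjm).1
  have hjm0 : F jm ≠ 0 := (Finset.mem_filter.mp hjm).2
  have hcoeff : (∑ j ∈ t, F j).coeff (d jm) ≠ 0 := by
    rw [Polynomial.finset_sum_coeff]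
    rw [Finset.sum_eq_single jm]
    · rw [← hd jm hjms hjm0]
      exact Polynomial.leadingCoeff_ne_zero.mpr hjm0
    · intro j hjt hne
      have hjs := (Finset.mem_filter.mp hjt).1
      have hj0 := (Finset.mem_filter.mp hjt).2
      apply Polynomial.coeff_eq_zero_of_natDegree_lt
      rw [hd j hjs hj0]
      exact lt_of_le_of_ne (hmax j hjt) (fun e => hne (hinj j hjs jm hjms hj0 hjm0 e))
    · intro hmem; exact absurd hjm hmem
  have h5 := Polynomial.le_natDegree_of_ne_zero hcoeff
  rw [← hsum] at h5
  exact le_trans (hmax j₀ hj₀t) h5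

lemma deg_distinct_aux {m α β : ℕ} (hβ : 1 ≤ β) (hmα : m * β < α)
    {n1 n2 j l : ℕ} (hl : l ≤ m) (hjl : j < l)
    (he : n1 * α + (j + 1) * β = n2 * α + (l + 1) * β) : False := by
  have e1 : (j + 1) * β + β ≤ (l + 1) * β := by
    have h2 : j + 2 ≤ l + 1 := by omega
    calc (j + 1) * β + β = (j + 2) * β := by ring
      _ ≤ (l + 1) * β := mul_le_mul_left h2 β
  have e3 : n2 < n1 := by
    by_contra hc
    push_neg at hc
    have := mul_le_mul_left hc α
    omega
  have e4 : n2 * α + α ≤ n1 * α := by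
    have h2 : n2 + 1 ≤ n1 := e3
    calc n2 * α + α = (n2 + 1) * α := by ring
      _ ≤ n1 * α := mul_le_mul_left h2 α
  have e5 : (l + 1) * β ≤ (j + 1) * β + m * β := by
    have h2 : l + 1 ≤ (j + 1) + m := by omega
    calc (l + 1) * β ≤ ((j + 1) + m) * β := mul_le_mul_left h2 β
      _ = (j + 1) * β + m * β := by ring
  omega

lemma deg_distinct {m α β : ℕ} (hβ : 1 ≤ β) (hmα : m * β < α)
    {n1 n2 j l : ℕ} (hj : j ≤ m) (hl : l ≤ m)
    (he : n1 * α + (j + 1) * β = n2 * α + (l + 1) * β) : j = l := by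
  rcases lt_trichotomy j l with hlt | heq | hgt
  · exact absurd (deg_distinct_aux hβ hmα hl hlt he) not_false
  · exact heq
  · exact absurd (deg_distinct_aux hβ hmα hj hgt he.symm) not_false

lemma isCoordinate_X1 : IsCoordinate K (X 1) :=
  ⟨renameEquiv K (Equiv.swap 0 1), by simp⟩

lemma isCoordinate_p1 (k : ℕ) :
    IsCoordinate K (X 1 + (X 0 + X 1 ^ k) ^ 2) := by
  refine ⟨AlgEquiv.ofAlgHom
    (MvPolynomial.aeval ![X 1 + (X 0 + X 1 ^ k) ^ 2, X 0 + X 1 ^ k])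
    (MvPolynomial.aeval ![X 1 - (X 0 - X 1 ^ 2) ^ k, X 0 - X 1 ^ 2]) ?_ ?_, ?_⟩
  · apply MvPolynomial.algHom_ext
    intro i
    fin_cases i <;>
      · simp only [Fin.zero_eta, Fin.mk_one, AlgHom.comp_apply, AlgHom.id_apply, aeval_X,
          Matrix.cons_val_zero, Matrix.cons_val_one, Matrix.head_cons, map_add, map_sub, map_pow]
        ring
  · apply MvPolynomial.algHom_ext
    intro i
    fin_cases i <;>
      · simp only [Fin.zero_eta, Fin.mk_one, AlgHom.comp_apply, AlgHom.id_apply, aeval_X,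
          Matrix.cons_val_zero, Matrix.cons_val_one, Matrix.head_cons, map_add, map_sub, map_pow]
        ring
  · simp

lemma extract (f : P2 K)
    (hret : ∃ π : P2 K →ₐ[K] P2 K, π.comp π = π ∧ π.range = Algebra.adjoin K {f})
    (hbot : Algebra.adjoin K {f} ≠ ⊥) :
    ∃ A B : Polynomial K, MvPolynomial.aeval ![A, B] f = Polynomial.X := by
  obtain ⟨π, hππ, hrange⟩ := hret
  have hfmem : f ∈ π.range := by
    rw [hrange]; exact Algebra.self_mem_adjoin_singleton K f
  obtain ⟨g, hg⟩ := hfmem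
  have hπf : π f = f := by
    conv_lhs => rw [← hg]
    have h2 : (π.comp π) g = π g := by rw [hππ]
    simpa using h2.trans hg
  have h0 : π (X 0) ∈ Algebra.adjoin K {f} := by
    rw [← hrange]; exact ⟨X 0, rfl⟩
  have h1 : π (X 1) ∈ Algebra.adjoin K {f} := by
    rw [← hrange]; exact ⟨X 1, rfl⟩
  rw [Algebra.adjoin_singleton_eq_range_aeval] at h0 h1
  obtain ⟨Pa, hPa⟩ := h0
  obtain ⟨Pb, hPb⟩ := h1
  set τ : P2 K →ₐ[K] Polynomial K := MvPolynomial.aeval ![Pa, Pb] with hτ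
  have hcomp : (Polynomial.aeval f).comp τ = π := by
    apply MvPolynomial.algHom_ext
    intro i
    fin_cases i
    · simpa [hτ] using hPa
    · simpa [hτ] using hPb
  set G := τ f with hGdef
  have hΦG : Polynomial.aeval f G = f := by
    have h3 := DFunLike.congr_fun hcomp f
    simpa [hπf] using h3
  have hu : (τ.comp (Polynomial.aeval f) : Polynomial K →ₐ[K] Polynomial K)
      = Polynomial.aeval G := by
    apply Polynomial.algHom_ext
    simp [hτ, hGdef]
  have hGG : Polynomial.aeval G G = G := by
    have h4 := DFunLike.congr_fun hu G
    simp only [AlgHom.comp_apply, hΦG] at h4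
    exact h4.symm
  have hdeg : G.natDegree * G.natDegree = G.natDegree := by
    conv_rhs => rw [← hGG]
    rw [natDegree_paeval]
  have hcases : G.natDegree = 0 ∨ G.natDegree = 1 := by
    by_contra hc
    push_neg at hc
    have h5 : 2 ≤ G.natDegree := by omega
    have h6 : 2 * G.natDegree ≤ G.natDegree * G.natDegree :=
      Nat.mul_le_mul_right _ h5
    omega
  rcases hcases with h0' | h1'
  · exfalso
    obtain ⟨c, hc⟩ := Polynomial.natDegree_eq_zero.mp h0'
    have hfc : f = MvPolynomial.C c := by
      rw [← hΦG, ← hc, Polynomial.aeval_C, MvPolynomial.algebraMap_eq]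
    apply hbot
    rw [hfc]
    apply le_antisymm _ bot_le
    rw [Algebra.adjoin_le_iff]
    intro x hx
    rw [Set.mem_singleton_iff.mp hx]
    exact ⟨c, (MvPolynomial.algebraMap_eq K (Fin 2)).symm ▸ rfl⟩
  · have hG0 : G ≠ 0 := by
      intro e; rw [e] at h1'; simp at h1'
    have hform := Polynomial.eq_X_add_C_of_natDegree_le_one (le_of_eq h1')
    set a := G.coeff 1 with hadef
    set b := G.coeff 0 with hbdef
    have ha : a ≠ 0 := by
      have h9 : G.leadingCoeff ≠ 0 := Polynomial.leadingCoeff_ne_zero.mpr hG0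
      rwa [Polynomial.leadingCoeff, h1'] at h9
    have hid : Polynomial.C a * G + Polynomial.C b = G := by
      have h7 : Polynomial.aeval G (Polynomial.C a * Polynomial.X + Polynomial.C b) = G := by
        rw [← hform]; exact hGG
      simpa using h7
    have hco1 : a * a = a := by
      have := congrArg (fun p => Polynomial.coeff p 1) hid
      simpa [Polynomial.coeff_C] using this
    have hco0 : a * b + b = b := by
      have := congrArg (fun p => Polynomial.coeff p 0) hid
      simp only [Polynomial.coeff_add, Polynomial.coeff_C_mul, Polynomial.coeff_C_zero] at this
      exact this
    have ha1 : a = 1 := mul_left_cancel₀ ha (hco1.trans (mul_one a).symm)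
    have hb0 : b = 0 := by
      have h8 : a * b = 0 := by linear_combination hco0
      rcases mul_eq_zero.mp h8 with h | h
      · exact absurd h ha
      · exact h
    have hGX : G = Polynomial.X := by
      rw [hform, ha1, hb0]
      simp
    exact ⟨Pa, Pb, hGdef ▸ hGX⟩


set_option maxHeartbeats 1000000 in
lemma h_const (h : P2 K) (hh : h ≠ 0)
    (hyp1 : ∃ A B : Polynomial K, MvPolynomial.aeval ![A, B] (X 1 * h) = Polynomial.X)
    (hyp2 : ∃ A B : Polynomial K, MvPolynomial.aeval ![A, B]
        (X 1 * h + (X 0 + (X 1 * h) ^ ((Psi K h).natDegree + 2)) ^ 2) = Polynomial.X) :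
    ∃ c : K, c ≠ 0 ∧ h = MvPolynomial.C c := by
  classical
  set G := Psi K h with hGdef
  set m := G.natDegree with hmdef
  have hG0 : G ≠ 0 := by
    intro e
    exact hh ((Psi K).injective (e.trans (map_zero (Psi K)).symm))
  by_cases hn : ∀ j ∈ G.support, (G.coeff j).natDegree = 0
  · by_cases hm : m = 0
    · -- h is a nonzero constant
      have h0supp : (0 : ℕ) ∈ G.support := by
        have := Polynomial.natDegree_mem_support_of_nonzero hG0
        rwa [← hmdef, hm] at this
      obtain ⟨c, hc⟩ := Polynomial.natDegree_eq_zero.mp (hn 0 h0supp)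
      have hc0 : c ≠ 0 := by
        intro e
        rw [e, map_zero] at hc
        exact (Polynomial.mem_support_iff.mp h0supp) hc.symm
      have hGC : G = Polynomial.C (Polynomial.C c) := by
        have := Polynomial.eq_C_of_natDegree_eq_zero (hmdef ▸ hm)
        rw [this, ← hc]
      refine ⟨c, hc0, ?_⟩
      apply (Psi K).injective
      rw [← hGdef, hGC]
      have hC : (MvPolynomial.C c : P2 K) = algebraMap K (P2 K) c := rfl
      rw [hC, AlgEquiv.commutes]
      rw [Polynomial.algebraMap_apply, Polynomial.algebraMap_eq]
    · -- deg_y h = m ≥ 1 and all coefficients constant: use p = X 1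
      exfalso
      obtain ⟨A, B, hAB⟩ := hyp1
      have hV : B * MvPolynomial.aeval ![A, B] h = Polynomial.X := by
        rw [← hAB, map_mul]
        simp
      rw [key_sum] at hV
      rw [← hGdef, ← hmdef] at hV
      by_cases hB : B.natDegree = 0
      · obtain ⟨bb, hbb⟩ := Polynomial.natDegree_eq_zero.mp hB
        have hX : Polynomial.X
            = Polynomial.C (∑ j ∈ Finset.range (m + 1), ((G.coeff j).coeff 0) * bb ^ (j + 1)) := by
          rw [← hV, map_sum]
          refine Finset.sum_congr rfl fun j hj => ?_
          have hCj : G.coeff j = Polynomial.C ((G.coeff j).coeff 0) := by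
            by_cases hjs : j ∈ G.support
            · obtain ⟨cc, hcc⟩ := Polynomial.natDegree_eq_zero.mp (hn j hjs)
              rw [← hcc]; simp
            · rw [Polynomial.notMem_support_iff.mp hjs]; simp
          rw [hCj, ← hbb, Polynomial.aeval_C, Polynomial.algebraMap_eq]
          rw [← Polynomial.C_pow, ← Polynomial.C_mul]
          simp [Polynomial.coeff_C]
        exact Polynomial.X_ne_C _ hX
      · have hβ : 1 ≤ B.natDegree := Nat.one_le_iff_ne_zero.mpr hB
        have hB0 : B ≠ 0 := fun e => by rw [e] at hβ; simp at hβ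
        have hcm : G.coeff m ≠ 0 :=
          Polynomial.mem_support_iff.mp (hmdef ▸ Polynomial.natDegree_mem_support_of_nonzero hG0)
        have hFm : Polynomial.aeval A (G.coeff m) * B ^ (m + 1) ≠ 0 := by
          obtain ⟨cc, hcc⟩ := Polynomial.natDegree_eq_zero.mp
            (hn m (hmdef ▸ Polynomial.natDegree_mem_support_of_nonzero hG0))
          have hcc0 : cc ≠ 0 := by
            intro e; rw [e, map_zero] at hcc; exact hcm hcc.symm
          rw [← hcc, Polynomial.aeval_C]
          exact mul_ne_zero (by simp [Polynomial.algebraMap_eq, hcc0]) (pow_ne_zero _ hB0)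
        have hle := le_natDegree_sum (Finset.range (m + 1))
          (fun j => Polynomial.aeval A (G.coeff j) * B ^ (j + 1))
          (fun j => (j + 1) * B.natDegree)
          (fun j hj hF => by
            have h1 : Polynomial.aeval A (G.coeff j) ≠ 0 := left_ne_zero_of_mul hF
            have h2 : B ^ (j + 1) ≠ 0 := right_ne_zero_of_mul hF
            have hsupp : G.coeff j ≠ 0 := by
              intro e; apply h1; rw [e]; simp
            rw [Polynomial.natDegree_mul h1 h2, natDegree_paeval, Polynomial.natDegree_pow,
              hn j (Polynomial.mem_support_iff.mpr hsupp), zero_mul, zero_add])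
          (fun j hj l hl hFj hFl he => by
            have := Nat.eq_of_mul_eq_mul_right (lt_of_lt_of_le zero_lt_one hβ) he
            omega)
          m (by simp) hFm
        rw [hV] at hle
        have h2le : 2 ≤ (m + 1) * B.natDegree := by
          calc 2 = 2 * 1 := by norm_num
            _ ≤ (m + 1) * B.natDegree := Nat.mul_le_mul (by omega) hβ
        rw [Polynomial.natDegree_X] at hle
        omega
  · push_neg at hn
    obtain ⟨js, hjss, hjsd⟩ := hn
    have hjsd1 : 1 ≤ (G.coeff js).natDegree := Nat.one_le_iff_ne_zero.mpr hjsd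
    have hjsne : G.coeff js ≠ 0 := Polynomial.mem_support_iff.mp hjss
    have hjsm : js ≤ m := hmdef ▸ Polynomial.le_natDegree_of_ne_zero hjsne
    have hjsrange : js ∈ Finset.range (m + 1) := Finset.mem_range.mpr (by omega)
    exfalso
    obtain ⟨A, B, hAB⟩ := hyp2
    set k := m + 2 with hkdef
    have hk2 : 2 ≤ k := by omega
    set w := MvPolynomial.aeval ![A, B] h with hwdef
    set V := B * w with hVdef
    have hid : V + (A + V ^ k) ^ 2 = Polynomial.X := by
      rw [← hAB, map_add, map_pow, map_add, map_pow, map_mul]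
      simp only [aeval_X, Matrix.cons_val_zero, Matrix.cons_val_one, Matrix.head_cons]
      rfl
    have hVsum : V = ∑ j ∈ Finset.range (m + 1),
        Polynomial.aeval A (G.coeff j) * B ^ (j + 1) := by
      rw [hVdef, hwdef, key_sum, ← hGdef, ← hmdef]
    by_cases hV0 : V = 0
    · have hz : (0 : Polynomial K) ^ k = 0 := by
        exact zero_pow (by omega)
      rw [hV0, hz, add_zero, zero_add] at hid
      have h2 : (A ^ 2).natDegree = (Polynomial.X : Polynomial K).natDegree := by rw [hid]
      rw [Polynomial.natDegree_pow, Polynomial.natDegree_X] at h2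
      omega
    · have hB0 : B ≠ 0 := fun e => hV0 (by rw [hVdef, e, zero_mul])
      have hw0 : w ≠ 0 := fun e => hV0 (by rw [hVdef, e, mul_zero])
      set D := A + V ^ k with hDdef
      have hVX : V = Polynomial.X - D ^ 2 := by rw [hDdef]; linear_combination hid
      have hAD : A = D - V ^ k := by rw [hDdef]; ring
      have hdegVw : V.natDegree = B.natDegree + w.natDegree := by
        rw [hVdef]; exact Polynomial.natDegree_mul hB0 hw0
      by_cases hD : D.natDegree = 0
      · -- D constant
        obtain ⟨d, hd⟩ := Polynomial.natDegree_eq_zero.mp hD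
        have hVform : V = Polynomial.X - Polynomial.C (d * d) := by
          rw [hVX, ← hd, sq, ← Polynomial.C_mul]
        have hVdeg : V.natDegree = 1 := by
          rw [hVform]; exact Polynomial.natDegree_X_sub_C _
        have hVkdeg : (V ^ k).natDegree = k := by
          rw [Polynomial.natDegree_pow, hVdeg, mul_one]
        have hltA : D.natDegree < (V ^ k).natDegree := by
          rw [hVkdeg, hD]; omega
        have hAdeg : A.natDegree = k := by
          rw [hAD, Polynomial.natDegree_sub_eq_right_of_natDegree_lt hltA, hVkdeg]
        have hA1 : 1 ≤ A.natDegree := by omega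
        have hbw : B.natDegree + w.natDegree = 1 := by rw [← hdegVw, hVdeg]
        by_cases hBdeg : B.natDegree = 0
        · obtain ⟨b, hb⟩ := Polynomial.natDegree_eq_zero.mp hBdeg
          have hw2 : w = Polynomial.aeval A
              ((Polynomial.aeval (Polynomial.C b) :
                Polynomial (Polynomial K) →ₐ[Polynomial K] Polynomial K) G) := by
            rw [hwdef, ← hb, aeval_pair_Cb, hGdef]
          have hwdeg : w.natDegree
              = ((Polynomial.aeval (Polynomial.C b) :
                Polynomial (Polynomial K) →ₐ[Polynomial K] Polynomial K) G).natDegree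
                  * A.natDegree := by
            rw [hw2, natDegree_paeval]
          rw [hAdeg] at hwdeg
          have hw1 : w.natDegree = 1 := by omega
          rw [hw1] at hwdeg
          have hdvd : k ∣ 1 :=
            ⟨((Polynomial.aeval (Polynomial.C b) :
                Polynomial (Polynomial K) →ₐ[Polynomial K] Polynomial K) G).natDegree,
              hwdeg.trans (mul_comm _ _)⟩
          have := Nat.le_of_dvd one_pos hdvd
          omega
        · have hwdeg0 : w.natDegree = 0 := by omega
          have hBdeg1 : B.natDegree = 1 := by omega
          obtain ⟨c', hc'⟩ := Polynomial.natDegree_eq_zero.mp hwdeg0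
          have hc'0 : c' ≠ 0 := fun e => hw0 (by rw [← hc', e, map_zero])
          have hBV : B = V * Polynomial.C c'⁻¹ := by
            have h1 : V = B * Polynomial.C c' := by rw [hVdef, hc']
            rw [h1, mul_assoc, ← Polynomial.C_mul, mul_inv_cancel₀ hc'0]
            simp
          set Θ : Polynomial K →ₐ[K] Polynomial K :=
            Polynomial.aeval (Polynomial.X + Polynomial.C (d * d)) with hΘ
          have hcomp : Θ (MvPolynomial.aeval ![A, B] h)
              = MvPolynomial.aeval ![Θ A, Θ B] h := by
            have h2 : (Θ.comp (MvPolynomial.aeval ![A, B]) : P2 K →ₐ[K] Polynomial K)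
                = MvPolynomial.aeval ![Θ A, Θ B] := by
              apply MvPolynomial.algHom_ext
              intro i
              fin_cases i <;> simp
            exact DFunLike.congr_fun h2 h
          have hΘV : Θ V = Polynomial.X := by
            rw [hVform, map_sub, Polynomial.aeval_X, Polynomial.aeval_C,
              Polynomial.algebraMap_eq]
            ring
          have hΘA : Θ A = Polynomial.C d - Polynomial.X ^ k := by
            rw [hAD, map_sub, map_pow, hΘV, ← hd, Polynomial.aeval_C, Polynomial.algebraMap_eq]
          have hΘB : Θ B = Polynomial.X * Polynomial.C c'⁻¹ := by
            rw [hBV, map_mul, hΘV, Polynomial.aeval_C, Polynomial.algebraMap_eq]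
          have hnew : MvPolynomial.aeval ![Θ A, Θ B] h = Polynomial.C c' := by
            rw [← hcomp, ← hwdef, ← hc', Polynomial.aeval_C, Polynomial.algebraMap_eq]
          have hVnew : (Θ B) * MvPolynomial.aeval ![Θ A, Θ B] h = Polynomial.X := by
            rw [hnew, hΘB, mul_assoc, ← Polynomial.C_mul, inv_mul_cancel₀ hc'0]
            simp
          rw [key_sum, ← hGdef, ← hmdef] at hVnew
          have hltA0 : (Polynomial.C d : Polynomial K).natDegree
              < (Polynomial.X ^ k : Polynomial K).natDegree := by
            rw [Polynomial.natDegree_X_pow, Polynomial.natDegree_C]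
            omega
          have hA₀ : (Θ A).natDegree = k := by
            rw [hΘA, Polynomial.natDegree_sub_eq_right_of_natDegree_lt hltA0,
              Polynomial.natDegree_X_pow]
          have hc'inv : (c'⁻¹ : K) ≠ 0 := inv_ne_zero hc'0
          have hB₀ : (Θ B).natDegree = 1 := by
            rw [hΘB, Polynomial.X_mul_C, Polynomial.natDegree_C_mul_X _ hc'inv]
          have hB₀0 : Θ B ≠ 0 := by
            rw [hΘB]
            exact mul_ne_zero Polynomial.X_ne_zero (by simpa using hc'inv)
          have hle := le_natDegree_sum (Finset.range (m + 1))
            (fun j => Polynomial.aeval (Θ A) (G.coeff j) * (Θ B) ^ (j + 1))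
            (fun j => (G.coeff j).natDegree * k + (j + 1) * 1)
            (fun j hj hF => by
              have h1 : Polynomial.aeval (Θ A) (G.coeff j) ≠ 0 := left_ne_zero_of_mul hF
              have h2 : (Θ B) ^ (j + 1) ≠ 0 := right_ne_zero_of_mul hF
              rw [Polynomial.natDegree_mul h1 h2, natDegree_paeval, Polynomial.natDegree_pow,
                hA₀, hB₀])
            (fun j hj l hl hFj hFl he => by
              refine deg_distinct (le_refl 1) (show m * 1 < k by omega) ?_ ?_ he
              · exact Nat.lt_succ_iff.mp (Finset.mem_range.mp hj)
              · exact Nat.lt_succ_iff.mp (Finset.mem_range.mp hl))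
            js hjsrange
            (mul_ne_zero (paeval_ne_zero hjsne (by rw [hA₀]; omega)) (pow_ne_zero _ hB₀0))
          rw [hVnew, Polynomial.natDegree_X] at hle
          have hk' : k ≤ (G.coeff js).natDegree * k := Nat.le_mul_of_pos_left k (by omega)
          omega
      · -- D nonconstant
        have hδ : 1 ≤ D.natDegree := Nat.one_le_iff_ne_zero.mpr hD
        have hD2deg : (D ^ 2).natDegree = 2 * D.natDegree := by
          rw [Polynomial.natDegree_pow]
        have hltV : (Polynomial.X : Polynomial K).natDegree < (D ^ 2).natDegree := by
          rw [hD2deg, Polynomial.natDegree_X]; omega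
        have hVdeg : V.natDegree = 2 * D.natDegree := by
          rw [hVX, Polynomial.natDegree_sub_eq_right_of_natDegree_lt hltV, hD2deg]
        have hVkdeg : (V ^ k).natDegree = k * (2 * D.natDegree) := by
          rw [Polynomial.natDegree_pow, hVdeg]
        have hltA : D.natDegree < (V ^ k).natDegree := by
          rw [hVkdeg]; nlinarith
        have hAdeg : A.natDegree = k * (2 * D.natDegree) := by
          rw [hAD, Polynomial.natDegree_sub_eq_right_of_natDegree_lt hltA, hVkdeg]
        have hA1 : 1 ≤ A.natDegree := by rw [hAdeg]; nlinarith
        have hbw : B.natDegree + w.natDegree = 2 * D.natDegree := by rw [← hdegVw, hVdeg]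
        by_cases hBdeg : B.natDegree = 0
        · obtain ⟨b, hb⟩ := Polynomial.natDegree_eq_zero.mp hBdeg
          have hw2 : w = Polynomial.aeval A
              ((Polynomial.aeval (Polynomial.C b) :
                Polynomial (Polynomial K) →ₐ[Polynomial K] Polynomial K) G) := by
            rw [hwdef, ← hb, aeval_pair_Cb, hGdef]
          have hwdeg : w.natDegree
              = ((Polynomial.aeval (Polynomial.C b) :
                Polynomial (Polynomial K) →ₐ[Polynomial K] Polynomial K) G).natDegree
                  * A.natDegree := by
            rw [hw2, natDegree_paeval]
          rw [hAdeg] at hwdeg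
          have hw1 : w.natDegree = 2 * D.natDegree := by omega
          rw [hw1] at hwdeg
          rcases Nat.eq_zero_or_pos
              (((Polynomial.aeval (Polynomial.C b) :
                Polynomial (Polynomial K) →ₐ[Polynomial K] Polynomial K) G).natDegree)
            with h0 | h1
          · rw [h0, zero_mul] at hwdeg; omega
          · nlinarith
        · have hβ : 1 ≤ B.natDegree := Nat.one_le_iff_ne_zero.mpr hBdeg
          have hβle : B.natDegree ≤ 2 * D.natDegree := by omega
          have hdist : m * B.natDegree < A.natDegree := by
            rw [hAdeg, hkdef]; nlinarith
          have hle := le_natDegree_sum (Finset.range (m + 1))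
            (fun j => Polynomial.aeval A (G.coeff j) * B ^ (j + 1))
            (fun j => (G.coeff j).natDegree * A.natDegree + (j + 1) * B.natDegree)
            (fun j hj hF => by
              have h1 : Polynomial.aeval A (G.coeff j) ≠ 0 := left_ne_zero_of_mul hF
              have h2 : B ^ (j + 1) ≠ 0 := right_ne_zero_of_mul hF
              rw [Polynomial.natDegree_mul h1 h2, natDegree_paeval, Polynomial.natDegree_pow])
            (fun j hj l hl hFj hFl he => by
              refine deg_distinct hβ hdist ?_ ?_ he
              · exact Nat.lt_succ_iff.mp (Finset.mem_range.mp hj)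
              · exact Nat.lt_succ_iff.mp (Finset.mem_range.mp hl))
            js hjsrange
            (mul_ne_zero (paeval_ne_zero hjsne hA1) (pow_ne_zero _ hB0))
          rw [← hVsum, hVdeg] at hle
          have h3 : A.natDegree ≤ (G.coeff js).natDegree * A.natDegree :=
            Nat.le_mul_of_pos_left _ (by omega)
          have h6 : 2 * D.natDegree < A.natDegree := by
            rw [hAdeg]; nlinarith
          omega

end FinalStepAux


open FinalStepAux in
theorem finalStep {K : Type*} [Field K] [CharZero K]
    (h : P2 K) (hh : h ≠ 0)
    (φ : P2 K →ₐ[K] P2 K)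
    (hφx : φ (X 0) = X 0)
    (hφy : φ (X 1) = X 1 * h)
    (hr : ∀ p : P2 K, IsCoordinate K p →
      IsProperRetract K (Algebra.adjoin K {φ p})) :
    (∃ c : K, c ≠ 0 ∧ h = C c) ∧ Function.Bijective φ := by
  have hconst : ∃ c : K, c ≠ 0 ∧ h = C c := by
    apply h_const h hh
    · have hp := hr (X 1) isCoordinate_X1
      rw [hφy] at hp
      exact extract _ hp.1 hp.2.1
    · set k := (Psi K h).natDegree + 2 with hk
      have hp := hr _ (isCoordinate_p1 (K := K) k)
      have hφp : φ (X 1 + (X 0 + X 1 ^ k) ^ 2)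
          = X 1 * h + (X 0 + (X 1 * h) ^ k) ^ 2 := by
        rw [map_add, map_pow, map_add, map_pow, hφx, hφy]
      rw [hφp] at hp
      exact extract _ hp.1 hp.2.1
  obtain ⟨c, hc0, hcC⟩ := hconst
  refine ⟨⟨c, hc0, hcC⟩, ?_⟩
  set ψ : P2 K →ₐ[K] P2 K := MvPolynomial.aeval ![X 0, MvPolynomial.C c⁻¹ * X 1] with hψ
  have hl : ψ.comp φ = AlgHom.id K (P2 K) := by
    apply MvPolynomial.algHom_ext
    intro i
    fin_cases i
    · simp [hφx, hψ]
    · show ψ (φ (X 1)) = X 1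
      rw [hφy, hcC, map_mul]
      have h1 : ψ (X 1) = MvPolynomial.C c⁻¹ * X 1 := by simp [hψ]
      have h2 : ψ (MvPolynomial.C c) = MvPolynomial.C c := by simp [hψ]
      rw [h1, h2, mul_comm, ← mul_assoc, ← MvPolynomial.C_mul, mul_inv_cancel₀ hc0,
        MvPolynomial.C_1, one_mul]
  have hrt : φ.comp ψ = AlgHom.id K (P2 K) := by
    apply MvPolynomial.algHom_ext
    intro i
    fin_cases i
    · simp [hφx, hψ]
    · show φ (ψ (X 1)) = X 1
      have h1 : ψ (X 1) = MvPolynomial.C c⁻¹ * X 1 := by simp [hψ]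
      rw [h1, map_mul, hφy, hcC]
      have h2 : φ (MvPolynomial.C c⁻¹) = MvPolynomial.C c⁻¹ := by
        have := φ.commutes c⁻¹
        simpa using this
      rw [h2, ← mul_assoc, mul_comm (MvPolynomial.C c⁻¹) (X 1), mul_assoc,
        ← MvPolynomial.C_mul, inv_mul_cancel₀ hc0, MvPolynomial.C_1, mul_one]
  constructor
  · intro a b hab
    have h3 := congrArg ψ hab
    have ha := DFunLike.congr_fun hl a
    have hb := DFunLike.congr_fun hl b
    simp only [AlgHom.comp_apply, AlgHom.id_apply] at ha hb
    rwa [ha, hb] at h3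
  · intro y
    refine ⟨ψ y, ?_⟩
    have hy := DFunLike.congr_fun hrt y
    simp only [AlgHom.comp_apply, AlgHom.id_apply] at hy
    exact hy
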